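/- arXiv:1804.00916 — 2 statements merged into one kernel-verified Lean document; each statement's English description precedes it below -/
import Mathlib

section
/- Let k be a commutative ring and V = k^n with basis v_1,...,v_n. As left k[W_n]-modules, V^{⊗r} is isomorphic to the direct sum over l = 1, ..., min(n,r) of S(r,l) copies of H_n(l), where S(r,l) is the Stirling number of the second kind, i.e., the number of set-partitions of {1,...,r} into exactly l nonempty blocks. -/
noncomputable section

open Equiv

/-- The linear action of a group `G` on the free `k`-module `X → k` of functions,
induced from a `G`-action on `X` by `(g • f) x = f (g⁻¹ • x)`. -/
def actEnd (k : Type) [CommRing k] (G : Type) [Group G] (X : Type) [MulAction G X] :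
    G →* Module.End k (X → k) where
  toFun g := LinearMap.funLeft k k fun x => g⁻¹ • x
  map_one' := by
    ext f x
    simp
  map_mul' g₁ g₂ := by
    ext f x
    simp [mul_smul]

/-- The diagonal (value-permutation) action of the symmetric group `W_n` on
`V^{⊗r}` (`V = k^n`), modelled as the free `k`-module on multi-indices `Fin r → Fin n`;
on basis vectors, `w ⬝ (v_{i_1} ⊗ ⋯ ⊗ v_{i_r}) = v_{w i_1} ⊗ ⋯ ⊗ v_{w i_r}`. -/
def permEnd (k : Type) [CommRing k] (n r : ℕ) :
    Equiv.Perm (Fin n) →* Module.End k ((Fin r → Fin n) → k) :=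
  actEnd k (Equiv.Perm (Fin n)) (Fin r → Fin n)

/-- `Φ_{n,r} : k[W_n] → End_k(V^{⊗r})`. -/
def PhiAlg (k : Type) [CommRing k] (n r : ℕ) :
    MonoidAlgebra k (Equiv.Perm (Fin n)) →ₐ[k] Module.End k ((Fin r → Fin n) → k) :=
  MonoidAlgebra.lift k (Module.End k ((Fin r → Fin n) → k)) (Equiv.Perm (Fin n)) (permEnd k n r)

/-- The restriction of `Φ_{n,r}` to the group algebra of a subgroup `G ≤ W_n`. -/
def PhiSub (k : Type) [CommRing k] (n r : ℕ) (G : Subgroup (Equiv.Perm (Fin n))) :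
    MonoidAlgebra k ↥G →ₐ[k] Module.End k ((Fin r → Fin n) → k) :=
  MonoidAlgebra.lift k (Module.End k ((Fin r → Fin n) → k)) ↥G ((permEnd k n r).comp G.subtype)

/-- `W_{n-1} = {w ∈ W_n : w(n) = n}`, the stabilizer of the last basis vector. -/
def stabLast (n : ℕ) (hn : 0 < n) : Subgroup (Equiv.Perm (Fin n)) :=
  MulAction.stabilizer (Equiv.Perm (Fin n)) (⟨n - 1, Nat.sub_lt hn Nat.one_pos⟩ : Fin n)

/-- `V(Λ)`: the span of the basis tensors whose multi-index has value-type `Λ`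
(the value-type of a multi-index `i` is the set-partition `Setoid.ker i` by fibers). -/
def Vpart (k : Type) [CommRing k] (n r : ℕ) (Λ : Setoid (Fin r)) :
    Submodule k ((Fin r → Fin n) → k) :=
  Submodule.span k {f | ∃ i : Fin r → Fin n, Setoid.ker i = Λ ∧ f = Pi.single i 1}

/-- `V'(Λ')`: the span of the basis tensors `v_{i_1} ⊗ ⋯ ⊗ v_{i_r} ⊗ v_n`
whose multi-index `(i_1, …, i_r, n)` has value-type `Λ'`. -/
def Vpart' (k : Type) [CommRing k] (n r : ℕ) (hn : 0 < n) (Λ' : Setoid (Fin (r + 1))) :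
    Submodule k ((Fin (r + 1) → Fin n) → k) :=
  Submodule.span k {f | ∃ i : Fin (r + 1) → Fin n, Setoid.ker i = Λ' ∧
    i (Fin.last r) = (⟨n - 1, Nat.sub_lt hn Nat.one_pos⟩ : Fin n) ∧ f = Pi.single i 1}

/-- The submodule `V^{⊗r} ⊗ v_n ⊆ V^{⊗(r+1)}`. -/
def lastSub (k : Type) [CommRing k] (n r : ℕ) (hn : 0 < n) :
    Submodule k ((Fin (r + 1) → Fin n) → k) :=
  Submodule.span k {f | ∃ i : Fin (r + 1) → Fin n,
    i (Fin.last r) = (⟨n - 1, Nat.sub_lt hn Nat.one_pos⟩ : Fin n) ∧ f = Pi.single i 1}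

/-- The multi-index of the tensor `v_{n-l+1} ⊗ ⋯ ⊗ v_n`. -/
def baseIdx (n l : ℕ) (h : l ≤ n) : Fin l → Fin n :=
  fun α => ⟨n - l + α.1, by have := α.isLt; omega⟩

/-- `H_n(l)`: the `k[W_n]`-submodule of `V^{⊗l}` generated by `v_{n-l+1} ⊗ ⋯ ⊗ v_n`. -/
def Hmod (k : Type) [CommRing k] (n l : ℕ) (h : l ≤ n) :
    Submodule k ((Fin l → Fin n) → k) :=
  Submodule.span k
    (Set.range fun w : Equiv.Perm (Fin n) => permEnd k n l w (Pi.single (baseIdx n l h) 1))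

/-- The multi-index of the tensor `v_{n-m} ⊗ ⋯ ⊗ v_{n-1}` (inside `U = ⟨v_1, …, v_{n-1}⟩`). -/
def baseIdx' (n m : ℕ) (h : m < n) : Fin m → Fin n :=
  fun α => ⟨n - 1 - m + α.1, by have := α.isLt; omega⟩

/-- `H_{n-1}(m)`: the `k[W_{n-1}]`-submodule of `U^{⊗m}` generated by
`v_{n-m} ⊗ ⋯ ⊗ v_{n-1}`, where `U = ⟨v_1, …, v_{n-1}⟩`. -/
def Hprime (k : Type) [CommRing k] (n m : ℕ) (h : m < n) :
    Submodule k ((Fin m → Fin n) → k) :=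
  Submodule.span k
    (Set.range fun w : ↥(stabLast n (by omega)) =>
      permEnd k n m ↑w (Pi.single (baseIdx' n m h) 1))

/-- The Young subgroup `W_{(n-l,1^l)}` of permutations fixing each of the last `l` points. -/
def fixTop (n l : ℕ) : Subgroup (Equiv.Perm (Fin n)) where
  carrier := {w | ∀ j : Fin n, n - l ≤ (j : ℕ) → w j = j}
  one_mem' := by intro j _; rfl
  mul_mem' := by
    intro a b ha hb j hj
    simp only [Set.mem_setOf_eq] at ha hb
    rw [Equiv.Perm.mul_apply, hb j hj, ha j hj]
  inv_mem' := by
    intro a ha j hj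
    simp only [Set.mem_setOf_eq] at ha
    conv_lhs => rw [← ha j hj]
    exact Equiv.symm_apply_apply a j

/-- The index of the consecutive block (with block sizes `lam`) containing position `x`. -/
def blockIdx (lam : List ℕ) (x : ℕ) : ℕ :=
  ((List.range lam.length).filter fun t => (lam.take (t + 1)).sum ≤ x).length

/-- The Young subgroup `W_λ ≤ W_d`: permutations preserving each consecutive block
of sizes `λ_1, λ_2, …`. -/
def youngSubgroup (d : ℕ) (lam : List ℕ) : Subgroup (Equiv.Perm (Fin d)) where
  carrier := {w | ∀ j : Fin d, blockIdx lam ((w j : Fin d) : ℕ) = blockIdx lam (j : ℕ)}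
  one_mem' := by intro j; rfl
  mul_mem' := by
    intro a b ha hb j
    simp only [Set.mem_setOf_eq] at ha hb
    rw [Equiv.Perm.mul_apply, ha (b j), hb j]
  inv_mem' := by
    intro a ha j
    simp only [Set.mem_setOf_eq] at ha
    conv_rhs => rw [← show a (a⁻¹ j) = j from Equiv.apply_symm_apply a j]
    rw [ha (a⁻¹ j)]

/-- `x_λ = Σ_{w ∈ W_λ} w ∈ k[W_d]`. -/
def xElt (k : Type) [CommRing k] (d : ℕ) (lam : List ℕ) :
    MonoidAlgebra k (Equiv.Perm (Fin d)) :=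
  letI := Classical.decPred (· ∈ youngSubgroup d lam)
  ∑ w ∈ Finset.univ.filter (· ∈ youngSubgroup d lam), MonoidAlgebra.single w (1 : k)

/-- `y_λ = Σ_{w ∈ W_λ} sgn(w) w ∈ k[W_d]`. -/
def yElt (k : Type) [CommRing k] (d : ℕ) (lam : List ℕ) :
    MonoidAlgebra k (Equiv.Perm (Fin d)) :=
  letI := Classical.decPred (· ∈ youngSubgroup d lam)
  ∑ w ∈ Finset.univ.filter (· ∈ youngSubgroup d lam),
    MonoidAlgebra.single w ((Equiv.Perm.sign w : ℤ) : k)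

/-- `y_λ = Σ_{w ∈ W_λ ∩ G} sgn(w) w`, as an element of the group algebra of a
subgroup `G ≤ W_d` (for `G = W_{n-1}` and `λ ⊢ n-1` this is the usual `y_λ ∈ k[W_{n-1}]`). -/
def yEltSub (k : Type) [CommRing k] {d : ℕ} (G : Subgroup (Equiv.Perm (Fin d)))
    (lam : List ℕ) : MonoidAlgebra k ↥G :=
  letI : Fintype ↥G := Fintype.ofFinite ↥G
  letI := Classical.decPred fun w : ↥G => (w : Equiv.Perm (Fin d)) ∈ youngSubgroup d lam
  ∑ w ∈ Finset.univ.filter (fun w : ↥G => (w : Equiv.Perm (Fin d)) ∈ youngSubgroup d lam),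
    MonoidAlgebra.single w ((Equiv.Perm.sign (w : Equiv.Perm (Fin d)) : ℤ) : k)

/-- The dominance order on partitions (as lists of parts): `lam ⊵ mu`. -/
def Dominates (lam mu : List ℕ) : Prop :=
  ∀ t : ℕ, (mu.take t).sum ≤ (lam.take t).sum

/-- The conjugate (transpose) partition: `μᵀ_i = #{j : μ_j ≥ i}`. -/
def conjList (mu : List ℕ) : List ℕ :=
  (List.range mu.headI).map fun i => (mu.filter fun p => i < p).length

/-- `lam` is a partition of `d`: positive parts, in weakly decreasing order, summing to `d`. -/
def IsPartitionList (d : ℕ) (lam : List ℕ) : Prop :=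
  (∀ p ∈ lam, 0 < p) ∧ lam.sum = d ∧ lam.Pairwise (· ≥ ·)

/-- The hook partition `α(d,r) = (d-r, 1^r)`. -/
def hookPartition (d r : ℕ) : List ℕ := (d - r) :: List.replicate r 1

/-- The representation of `k[W_d]` on the permutation module `M^λ`, the free `k`-module
on the left cosets `W_d / W_λ` with `W_d` acting by left translation. -/
def PhiQuot (k : Type) [CommRing k] (d : ℕ) (lam : List ℕ) :
    MonoidAlgebra k (Equiv.Perm (Fin d)) →ₐ[k]
      Module.End k ((Equiv.Perm (Fin d) ⧸ youngSubgroup d lam) → k) :=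
  MonoidAlgebra.lift k _ _
    (actEnd k (Equiv.Perm (Fin d)) (Equiv.Perm (Fin d) ⧸ youngSubgroup d lam))

/-- The representation of `k[G]` (for `G ≤ W_d`) on the permutation module on the
left cosets `G / (G ∩ W_λ)`. -/
def PhiQuotSub (k : Type) [CommRing k] {d : ℕ} (G : Subgroup (Equiv.Perm (Fin d)))
    (lam : List ℕ) :
    MonoidAlgebra k ↥G →ₐ[k]
      Module.End k ((↥G ⧸ Subgroup.comap G.subtype (youngSubgroup d lam)) → k) :=
  MonoidAlgebra.lift k _ _
    (actEnd k ↥G (↥G ⧸ Subgroup.comap G.subtype (youngSubgroup d lam)))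

/-- The Stirling number of the second kind `S(r,l)`: the number of set-partitions
of an `r`-element set into exactly `l` nonempty blocks. -/
def stirling (r l : ℕ) : ℕ :=
  Nat.card {Λ : Setoid (Fin r) // Nat.card (Quotient Λ) = l}

section Stmt9Aux

variable {k : Type} [CommRing k] {n r m : ℕ}

instance stmt9_finiteSetoid (r : ℕ) : Finite (Setoid (Fin r)) :=
  Finite.of_injective (fun s => s.r) fun a b h =>
    Setoid.ext fun x y => iff_of_eq (congrFun (congrFun h x) y)

lemma stmt9_permEnd_apply (w : Equiv.Perm (Fin n)) (f : (Fin r → Fin n) → k)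
    (u : Fin r → Fin n) : permEnd k n r w f u = f (fun a => w⁻¹ (u a)) := rfl

lemma stmt9_baseIdx_injective (h : m ≤ n) : Function.Injective (baseIdx n m h) := by
  intro a b hab
  have : n - m + a.1 = n - m + b.1 := congrArg Fin.val hab
  exact Fin.ext (by omega)

lemma stmt9_permEnd_single (w : Equiv.Perm (Fin n)) (i : Fin r → Fin n) :
    permEnd k n r w (Pi.single i (1 : k)) = Pi.single (fun a => w (i a)) 1 := by
  classical
  funext u
  rw [stmt9_permEnd_apply]
  have hiff : ((fun a => w⁻¹ (u a)) = i) ↔ (u = fun a => w (i a)) := by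
    constructor
    · intro h; funext a; rw [← congrFun h a]; simp
    · intro h; funext a; rw [congrFun h a]; simp
  rw [Pi.single_apply, Pi.single_apply, if_congr hiff rfl rfl]

lemma stmt9_exists_perm (h : m ≤ n) (u : Fin m → Fin n) (hu : Function.Injective u) :
    ∃ w : Equiv.Perm (Fin n), ∀ a, w (baseIdx n m h a) = u a := by
  classical
  let e : {x // x ∈ Set.range (baseIdx n m h)} ≃ {x // x ∈ Set.range u} :=
    (Equiv.ofInjective _ (stmt9_baseIdx_injective h)).symm.trans (Equiv.ofInjective u hu)
  refine ⟨Equiv.extendSubtype e, fun a => ?_⟩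
  rw [Equiv.extendSubtype_apply_of_mem e _ ⟨a, rfl⟩]
  show ((Equiv.ofInjective u hu)
      ((Equiv.ofInjective _ (stmt9_baseIdx_injective h)).symm ⟨baseIdx n m h a, ⟨a, rfl⟩⟩) : Fin n)
    = u a
  have : (Equiv.ofInjective _ (stmt9_baseIdx_injective h)).symm ⟨baseIdx n m h a, ⟨a, rfl⟩⟩ = a := by
    apply (Equiv.ofInjective _ (stmt9_baseIdx_injective h)).injective
    simp [Equiv.ofInjective_apply]
  rw [this]
  simp [Equiv.ofInjective_apply]

lemma stmt9_mem_Hmod_iff (h : m ≤ n) (f : (Fin m → Fin n) → k) :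
    f ∈ Hmod k n m h ↔ ∀ u : Fin m → Fin n, ¬ Function.Injective u → f u = 0 := by
  classical
  constructor
  · intro hf
    refine Submodule.span_induction (p := fun f _ => ∀ u, ¬ Function.Injective u → f u = 0)
      ?_ ?_ ?_ ?_ hf
    · rintro g ⟨w, rfl⟩ u hu
      show permEnd k n m w (Pi.single (baseIdx n m h) 1) u = 0
      rw [stmt9_permEnd_single]
      refine Pi.single_eq_of_ne (fun hc => hu ?_) _
      rw [hc]
      exact w.injective.comp (stmt9_baseIdx_injective h)
    · intro u _; rfl
    · intro f g _ _ hf hg u hu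
      simp [hf u hu, hg u hu]
    · intro c f _ hf u hu
      simp [hf u hu]
  · intro hf
    have hrep : f = ∑ u : Fin m → Fin n, Pi.single u (f u) := (Finset.univ_sum_single f).symm
    rw [hrep]
    refine Submodule.sum_mem _ fun u _ => ?_
    by_cases hu : Function.Injective u
    · have h1 : (Pi.single u (f u) : (Fin m → Fin n) → k)
          = f u • (Pi.single u (1 : k) : (Fin m → Fin n) → k) := by
        funext x
        rcases eq_or_ne x u with rfl | hx
        · simp
        · simp [Pi.single_eq_of_ne hx]
      rw [h1]
      refine Submodule.smul_mem _ _ (Submodule.subset_span ?_)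
      obtain ⟨w, hw⟩ := stmt9_exists_perm h u hu
      refine ⟨w, ?_⟩
      show permEnd k n m w (Pi.single (baseIdx n m h) 1) = Pi.single u 1
      rw [stmt9_permEnd_single, show (fun a => w (baseIdx n m h a)) = u from funext hw]
    · rw [hf u hu]
      simp

lemma stmt9_Hmod_stable (h : m ≤ n) (w : Equiv.Perm (Fin n)) (v : (Fin m → Fin n) → k)
    (hv : v ∈ Hmod k n m h) : permEnd k n m w v ∈ Hmod k n m h := by
  rw [stmt9_mem_Hmod_iff] at hv ⊢
  intro u hu
  rw [stmt9_permEnd_apply]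
  exact hv _ fun hinj => hu fun a b hab => hinj (show w⁻¹ (u a) = w⁻¹ (u b) by rw [hab])

/-- fixed enumeration of the quotient of a setoid -/
def stmt9_qE (Λ : Setoid (Fin r)) : Quotient Λ ≃ Fin (Nat.card (Quotient Λ)) :=
  Finite.equivFinOfCardEq rfl

/-- fixed enumeration of the setoids with `m` blocks -/
def stmt9_pEnum (r m : ℕ) :
    {Λ : Setoid (Fin r) // Nat.card (Quotient Λ) = m} ≃ Fin (stirling r m) :=
  Finite.equivFinOfCardEq rfl

/-- The multi-index with value-type `P.1` and injective part `u`. -/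
def stmt9_idxP (n : ℕ) {r m : ℕ} (P : {Λ : Setoid (Fin r) // Nat.card (Quotient Λ) = m})
    (u : Fin m → Fin n) : Fin r → Fin n :=
  fun a => u (Fin.cast P.2 (stmt9_qE P.1 (Quotient.mk P.1 a)))

/-- The map induced by `i` on the quotient by its kernel. -/
def stmt9_bar (i : Fin r → Fin n) : Quotient (Setoid.ker i) → Fin n :=
  Quotient.lift i fun _ _ h => h

lemma stmt9_bar_injective (i : Fin r → Fin n) : Function.Injective (stmt9_bar i) := by
  intro x y
  induction x using Quotient.ind with | _ a =>
  induction y using Quotient.ind with | _ b =>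
  intro h
  exact Quotient.sound h

/-- The injective part of a multi-index `i`. -/
def stmt9_t (i : Fin r → Fin n) : Fin (Nat.card (Quotient (Setoid.ker i))) → Fin n :=
  fun b => stmt9_bar i ((stmt9_qE (Setoid.ker i)).symm b)

lemma stmt9_t_injective (i : Fin r → Fin n) : Function.Injective (stmt9_t i) :=
  fun a b h => (stmt9_qE (Setoid.ker i)).symm.injective (stmt9_bar_injective i h)

lemma stmt9_card_pos (hr : 0 < r) (i : Fin r → Fin n) :
    0 < Nat.card (Quotient (Setoid.ker i)) := by
  haveI : Nonempty (Quotient (Setoid.ker i)) := ⟨Quotient.mk _ ⟨0, hr⟩⟩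
  exact Nat.card_pos

lemma stmt9_card_le_n (i : Fin r → Fin n) : Nat.card (Quotient (Setoid.ker i)) ≤ n := by
  have := Nat.card_le_card_of_injective (stmt9_bar i) (stmt9_bar_injective i)
  simpa using this

lemma stmt9_card_le_r (i : Fin r → Fin n) : Nat.card (Quotient (Setoid.ker i)) ≤ r := by
  have := Nat.card_le_card_of_surjective (Quotient.mk (Setoid.ker i))
    (fun x => Quotient.inductionOn x fun a => ⟨a, rfl⟩)
  simpa using this

lemma stmt9_ker_idxP {m : ℕ} (P : {Λ : Setoid (Fin r) // Nat.card (Quotient Λ) = m})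
    (u : Fin m → Fin n) (hu : Function.Injective u) :
    Setoid.ker (stmt9_idxP n P u) = P.1 := by
  apply Setoid.ext
  intro a b
  constructor
  · intro hab
    have h2 := hu hab
    have h3 : stmt9_qE P.1 (Quotient.mk P.1 a) = stmt9_qE P.1 (Quotient.mk P.1 b) :=
      Fin.ext (by simpa using congrArg Fin.val h2)
    exact Quotient.exact ((stmt9_qE P.1).injective h3)
  · intro hab
    show stmt9_idxP n P u a = stmt9_idxP n P u b
    unfold stmt9_idxP
    rw [Quotient.sound hab]

lemma stmt9_idxP_t {m : ℕ} (i : Fin r → Fin n)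
    (hm : Nat.card (Quotient (Setoid.ker i)) = m) :
    stmt9_idxP n ⟨Setoid.ker i, hm⟩ (fun b => stmt9_t i (Fin.cast hm.symm b)) = i := by
  funext a
  show stmt9_t i (Fin.cast hm.symm (Fin.cast hm
      (stmt9_qE (Setoid.ker i) (Quotient.mk _ a)))) = i a
  have h1 : Fin.cast hm.symm (Fin.cast hm (stmt9_qE (Setoid.ker i) (Quotient.mk _ a)))
      = stmt9_qE (Setoid.ker i) (Quotient.mk _ a) := Fin.ext rfl
  rw [h1]
  show stmt9_bar i ((stmt9_qE (Setoid.ker i)).symm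
      (stmt9_qE (Setoid.ker i) (Quotient.mk _ a))) = i a
  rw [Equiv.symm_apply_apply]
  rfl

lemma stmt9_idxP_inj_t {m : ℕ} (P : {Λ : Setoid (Fin r) // Nat.card (Quotient Λ) = m})
    {t t' : Fin m → Fin n} (h : stmt9_idxP n P t = stmt9_idxP n P t') : t = t' := by
  funext b
  obtain ⟨a, ha⟩ := Quotient.exists_rep ((stmt9_qE P.1).symm (Fin.cast P.2.symm b))
  have h2 := congrFun h a
  unfold stmt9_idxP at h2
  have h3 : Quotient.mk P.1 a = (stmt9_qE P.1).symm (Fin.cast P.2.symm b) := ha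
  rw [h3, Equiv.apply_symm_apply] at h2
  have h4 : Fin.cast P.2 (Fin.cast P.2.symm b) = b := Fin.ext rfl
  rwa [h4] at h2

/-- The index type of the decomposition. -/
def stmt9_Idx (n r : ℕ) : Type :=
  Σ l : Fin (min n r), Σ _j : Fin (stirling r (l.1 + 1)),
    {t : Fin (l.1 + 1) → Fin n // Function.Injective t}

/-- The bijection from the decomposition index type to multi-indices. -/
def stmt9_F (n r : ℕ) : stmt9_Idx n r → (Fin r → Fin n) :=
  fun z => stmt9_idxP n ((stmt9_pEnum r (z.1.1 + 1)).symm z.2.1) z.2.2.1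

lemma stmt9_F_bijective (hr : 0 < r) : Function.Bijective (stmt9_F n r) := by
  constructor
  · rintro ⟨l, j, t, ht⟩ ⟨l', j', t', ht'⟩ h
    have h1 : Setoid.ker (stmt9_F n r ⟨l, j, ⟨t, ht⟩⟩)
        = ((stmt9_pEnum r (l.1 + 1)).symm j).1 := stmt9_ker_idxP _ _ ht
    have h2 : Setoid.ker (stmt9_F n r ⟨l', j', ⟨t', ht'⟩⟩)
        = ((stmt9_pEnum r (l'.1 + 1)).symm j').1 := stmt9_ker_idxP _ _ ht'
    rw [h] at h1
    have hΛ : ((stmt9_pEnum r (l.1 + 1)).symm j).1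
        = ((stmt9_pEnum r (l'.1 + 1)).symm j').1 := h1.symm.trans h2
    have hcard : l.1 + 1 = l'.1 + 1 := by
      rw [← ((stmt9_pEnum r (l.1 + 1)).symm j).2, hΛ, ((stmt9_pEnum r (l'.1 + 1)).symm j').2]
    have hll : l = l' := Fin.ext (by omega)
    subst hll
    have hjj : j = j' := (stmt9_pEnum r (l.1 + 1)).symm.injective (Subtype.ext hΛ)
    subst hjj
    have htt : t = t' := stmt9_idxP_inj_t _ h
    subst htt
    rfl
  · intro i
    have h1 := stmt9_card_pos hr i
    have h2 := stmt9_card_le_n i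
    have h3 := stmt9_card_le_r i
    have hlt : Nat.card (Quotient (Setoid.ker i)) - 1 < min n r :=
      lt_min (by omega) (by omega)
    set l : Fin (min n r) := ⟨Nat.card (Quotient (Setoid.ker i)) - 1, hlt⟩ with hl
    have hm : Nat.card (Quotient (Setoid.ker i)) = l.1 + 1 := by
      simp only [hl]; omega
    refine ⟨⟨l, stmt9_pEnum r (l.1 + 1) ⟨Setoid.ker i, hm⟩,
      ⟨fun b => stmt9_t i (Fin.cast hm.symm b), fun a b hab =>
        Fin.ext (by simpa using congrArg Fin.val (stmt9_t_injective i hab))⟩⟩, ?_⟩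
    show stmt9_idxP n ((stmt9_pEnum r (l.1 + 1)).symm
        (stmt9_pEnum r (l.1 + 1) ⟨Setoid.ker i, hm⟩))
        (fun b => stmt9_t i (Fin.cast hm.symm b)) = i
    rw [Equiv.symm_apply_apply]
    exact stmt9_idxP_t i hm

/-- `(injective functions → k)` is isomorphic to `Hmod`. -/
def stmt9_injFunEquiv (h : m ≤ n) :
    ({t : Fin m → Fin n // Function.Injective t} → k) ≃ₗ[k] ↥(Hmod k n m h) where
  toFun φ := ⟨fun u => if hu : Function.Injective u then φ ⟨u, hu⟩ else 0, by
    rw [stmt9_mem_Hmod_iff]; intro u hu; exact dif_neg hu⟩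
  map_add' φ ψ := Subtype.ext (funext fun u => by
    by_cases hu : Function.Injective u <;> simp [hu])
  map_smul' c φ := Subtype.ext (funext fun u => by
    by_cases hu : Function.Injective u <;> simp [hu])
  invFun ψ t := ψ.1 t.1
  left_inv φ := funext fun t => dif_pos t.2
  right_inv ψ := Subtype.ext (funext fun u => by
    by_cases hu : Function.Injective u
    · exact dif_pos hu
    · exact (dif_neg hu).trans ((stmt9_mem_Hmod_iff h ψ.1).mp ψ.2 u hu).symm)

/-- The full decomposition equivalence. -/
def stmt9_bigE (k : Type) [CommRing k] (n r : ℕ) (hr : 0 < r) :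
    ((Fin r → Fin n) → k) ≃ₗ[k]
      ((l : Fin (min n r)) → Fin (stirling r (l.1 + 1)) →
        ↥(Hmod k n (l.1 + 1) (Nat.succ_le_of_lt (lt_of_lt_of_le l.isLt (min_le_left n r))))) :=
  (LinearEquiv.funCongrLeft k k (Equiv.ofBijective (stmt9_F n r)
      (stmt9_F_bijective hr))).trans <|
  (LinearEquiv.piCurry k (fun (l : Fin (min n r))
      (_ : Σ _j : Fin (stirling r (l.1 + 1)),
        {t : Fin (l.1 + 1) → Fin n // Function.Injective t}) => k)).trans <|
  (LinearEquiv.piCongrRight fun l =>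
    (LinearEquiv.piCurry k (fun (_ : Fin (stirling r (l.1 + 1)))
        (_ : {t : Fin (l.1 + 1) → Fin n // Function.Injective t}) => k)).trans <|
    LinearEquiv.piCongrRight fun _j =>
      stmt9_injFunEquiv (Nat.succ_le_of_lt (lt_of_lt_of_le l.isLt (min_le_left n r))))

lemma stmt9_bigE_apply (hr : 0 < r) (f : (Fin r → Fin n) → k) (l : Fin (min n r))
    (j : Fin (stirling r (l.1 + 1))) :
    ((stmt9_bigE k n r hr f l j : ↥(Hmod k n (l.1 + 1) (Nat.succ_le_of_lt (lt_of_lt_of_le l.isLt (min_le_left n r))))) :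
      (Fin (l.1 + 1) → Fin n) → k) =
      fun u => if hu : Function.Injective u then f (stmt9_F n r ⟨l, j, ⟨u, hu⟩⟩) else 0 :=
  rfl

end Stmt9Aux


/-- As left `k[W_n]`-modules, `V^{⊗r} ≅ ⨁_{l=1}^{min(n,r)} H_n(l)^{S(r,l)}`,
where `S(r,l)` is the Stirling number of the second kind. -/
theorem stmt_9 (k : Type) [CommRing k] (n r : ℕ) (hr : 0 < r) :
    ∃ (hst : ∀ (m : ℕ) (hm : m ≤ n) (w : Equiv.Perm (Fin n))
        (v : (Fin m → Fin n) → k),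
          v ∈ Hmod k n m hm → permEnd k n m w v ∈ Hmod k n m hm)
      (e : ((Fin r → Fin n) → k) ≃ₗ[k]
        ((l : Fin (min n r)) → Fin (stirling r (l.1 + 1)) →
          ↥(Hmod k n (l.1 + 1) (by have := l.isLt; omega)))),
      ∀ (w : Equiv.Perm (Fin n)) (f : (Fin r → Fin n) → k)
        (l : Fin (min n r)) (j : Fin (stirling r (l.1 + 1))),
        e (permEnd k n r w f) l j =
          ⟨permEnd k n (l.1 + 1) w ↑(e f l j),
            hst (l.1 + 1) (by have := l.isLt; omega) w ↑(e f l j) (e f l j).2⟩ := by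
  refine ⟨fun m hm w v hv => stmt9_Hmod_stable hm w v hv, stmt9_bigE k n r hr, ?_⟩
  intro w f l j
  apply Subtype.ext
  funext u
  have hL := congrFun (stmt9_bigE_apply hr (permEnd k n r w f) l j) u
  have hR := congrFun (stmt9_bigE_apply hr f l j) (fun a => w⁻¹ (u a))
  rw [hL]
  show _ = permEnd k n (l.1 + 1) w ↑(stmt9_bigE k n r hr f l j) u
  rw [stmt9_permEnd_apply, hR]
  by_cases hu : Function.Injective u
  · have hu' : Function.Injective (fun a => w⁻¹ (u a)) :=
      fun a b hab => hu (w⁻¹.injective hab)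
    rw [dif_pos hu, dif_pos hu', stmt9_permEnd_apply]
    rfl
  · have hu' : ¬ Function.Injective (fun a => w⁻¹ (u a)) := fun hinj =>
      hu fun a b hab => hinj (show w⁻¹ (u a) = w⁻¹ (u b) by rw [hab])
    rw [dif_neg hu, dif_neg hu']
end
end

section
/- Let k be a nontrivial commutative ring and V = k^n with basis v_1,...,v_n. If n - 2 ≤ r, then the algebra homomorphism Φ_{n,r+1/2} : k[W_{n-1}] → End_k(V^{⊗r}) induced by restricting the diagonal basis-permuting action of W_n on V^{⊗r} to W_{n-1} = {w ∈ W_n : w(n) = n} is injective. -/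
noncomputable section

open Equiv

/-- A permutation fixing every point other than `a` is the identity. -/
lemma perm_eq_one_of_fixes_ne {α : Type*} (σ : Equiv.Perm α) (a : α)
    (h : ∀ j, j ≠ a → σ j = j) : σ = 1 := by
  have ha : σ a = a := by
    by_cases hc : σ a = a
    · exact hc
    · exact absurd (σ.injective (h (σ a) hc)) hc
  ext j
  by_cases hj : j = a
  · simp [hj, ha]
  · simp [h j hj]

/-- If `n - 2 ≤ r`, the representation `Φ_{n,r+1/2} : k[W_{n-1}] → End_k(V^{⊗r})`
is faithful. -/
theorem stmt_12 (k : Type) [CommRing k] [Nontrivial k] (n r : ℕ) (hn : 0 < n)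
    (hr : n - 2 ≤ r) : Function.Injective ⇑(PhiSub k n r (stabLast n hn)) := by
  rw [injective_iff_map_eq_zero]
  intro x hx
  set i₀ : Fin r → Fin n := fun α => ⟨min α.1 (n - 1), by omega⟩ with hi₀
  -- injectivity of g ↦ g ∘ i₀ on G
  have hinj : ∀ g g' : ↥(stabLast n hn),
      (fun α => (g : Perm (Fin n)) (i₀ α)) = (fun α => (g' : Perm (Fin n)) (i₀ α)) →
      g = g' := by
    intro g g' hgg
    have hlast : (g : Perm (Fin n)) ⟨n - 1, Nat.sub_lt hn Nat.one_pos⟩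
        = ⟨n - 1, Nat.sub_lt hn Nat.one_pos⟩ := g.2
    have hlast' : (g' : Perm (Fin n)) ⟨n - 1, Nat.sub_lt hn Nat.one_pos⟩
        = ⟨n - 1, Nat.sub_lt hn Nat.one_pos⟩ := g'.2
    have hfix : ∀ j : Fin n, j ≠ (⟨n - 2, by omega⟩ : Fin n) →
        ((g : Perm (Fin n))⁻¹ * (g' : Perm (Fin n))) j = j := by
      intro j hj
      have hjv : (j : ℕ) ≠ n - 2 := by
        intro hc; exact hj (Fin.ext hc)
      rcases eq_or_ne (j : ℕ) (n - 1) with hje | hje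
      · have hj' : j = ⟨n - 1, Nat.sub_lt hn Nat.one_pos⟩ := Fin.ext hje
        rw [hj', Equiv.Perm.mul_apply, hlast']
        exact Equiv.Perm.inv_eq_iff_eq.mpr hlast.symm
      · have hjlt : (j : ℕ) < n - 2 := by
          have := j.isLt; omega
        have hjr : (j : ℕ) < r := by omega
        have hij : i₀ ⟨(j : ℕ), hjr⟩ = j := by
          apply Fin.ext
          simp only [hi₀]
          have := j.isLt; omega
        have := congrFun hgg ⟨(j : ℕ), hjr⟩
        rw [hij] at this
        rw [Equiv.Perm.mul_apply, ← this, ← Equiv.Perm.mul_apply, inv_mul_cancel, Equiv.Perm.one_apply]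
    have hone := perm_eq_one_of_fixes_ne _ _ hfix
    exact Subtype.ext (inv_mul_eq_one.mp hone)
  -- evaluate Φ x at the basis vector indexed by i₀, at the point g₀ • i₀
  have key : ∀ g₀ : ↥(stabLast n hn), x.coeff g₀ = 0 := by
    intro g₀
    have h1 := congrFun (congrArg (fun T : Module.End k ((Fin r → Fin n) → k) =>
      T (Pi.single i₀ (1 : k))) hx) (fun α => (g₀ : Perm (Fin n)) (i₀ α))
    simp only [PhiSub, MonoidAlgebra.lift_apply, Finsupp.sum, LinearMap.sum_apply,
      Finset.sum_apply, LinearMap.zero_apply, Pi.zero_apply] at h1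
    by_cases hmem : g₀ ∈ x.coeff.support
    · rw [Finset.sum_eq_single_of_mem g₀ hmem] at h1
      · simp only [permEnd, actEnd, MonoidHom.comp_apply, MonoidHom.coe_mk, OneHom.coe_mk,
          LinearMap.smul_apply, LinearMap.funLeft_apply, Pi.smul_apply, Pi.single_apply,
          smul_eq_mul] at h1
        rw [if_pos (by funext α; simp [Equiv.Perm.smul_def]), mul_one] at h1
        exact h1
      · intro g hg hne
        have hne' : (fun α => (g : Perm (Fin n)) (i₀ α)) ≠
            (fun α => (g₀ : Perm (Fin n)) (i₀ α)) := fun hc => hne (hinj _ _ hc)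
        have hcond : (fun α => ((g : Perm (Fin n)))⁻¹ ((g₀ : Perm (Fin n)) (i₀ α))) ≠ i₀ := by
          intro hc
          apply hne'
          funext α
          have := congrFun hc α
          conv_lhs => rw [← this]
          exact Equiv.apply_symm_apply _ _
        simp only [permEnd, actEnd, MonoidHom.comp_apply, MonoidHom.coe_mk, OneHom.coe_mk,
          LinearMap.smul_apply, LinearMap.funLeft_apply, Pi.smul_apply]
        rw [Pi.single_apply]
        rw [if_neg (by
          intro hc
          apply hcond
          funext α
          have := congrFun hc α
          simpa [Equiv.Perm.smul_def] using this)]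
        simp
    · exact Finsupp.notMem_support_iff.mp hmem
  exact MonoidAlgebra.ext (Finsupp.ext key)
end
end
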